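/- arXiv:1411.4648 — 2 statements merged into one kernel-verified Lean document; each statement's English description precedes it below -/
import Mathlib

section
/- In the CHSH scenario (binary inputs x,y and binary outputs a,b), every nonsignalling conditional distribution p(a,b|x,y) with CHSH ≤ 0 for all eight symmetry-relabelings of the CHSH expression admits a causal model with direct influence X→B of zero causal strength, i.e. is reproducible by a local hidden variable model. Equivalently, min C_{X→B} = 0 whenever max over symmetries of CHSH is ≤ 0. -/
/-- The CHSH quantity `p(00|00) + p(00|01) + p(00|10) − p(00|11) − p_A(0|0) − p_B(0|0)`. -/
def CHSHval (p : Fin 2 → Fin 2 → Fin 2 → Fin 2 → ℝ) : ℝ :=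
  p 0 0 0 0 + p 0 0 0 1 + p 0 0 1 0 - p 0 0 1 1
    - (p 0 0 0 0 + p 0 1 0 0) - (p 0 0 0 0 + p 1 0 0 0)

/-- Relabeling of inputs (`πx, πy`), outputs (`πa, πb`, possibly input-dependent) and
exchange of the two parties (`swap`), acting on conditional distributions `p(a,b|x,y)`. -/
def relabel (πx πy : Equiv.Perm (Fin 2)) (πa πb : Fin 2 → Equiv.Perm (Fin 2))
    (swap : Bool) (p : Fin 2 → Fin 2 → Fin 2 → Fin 2 → ℝ) :
    Fin 2 → Fin 2 → Fin 2 → Fin 2 → ℝ :=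
  fun a b x y =>
    if swap then p (πb y b) (πa x a) (πy y) (πx x)
    else p (πa x a) (πb y b) (πx x) (πy y)

/-- Triple distribution on `(A_x, B_0, B_1)` used in Fine's construction. -/
noncomputable def triCell (c0 c1 m n0 n1 v s : ℝ) : Fin 2 → Fin 2 → Fin 2 → ℝ :=
  fun a b0 b1 =>
    if a = 0 then
      if b0 = 0 then (if b1 = 0 then s else c0 - s)
      else (if b1 = 0 then c1 - s else m - c0 - c1 + s)
    else
      if b0 = 0 then (if b1 = 0 then v - s else (n0 - v) - (c0 - s))
      else (if b1 = 0 then (n1 - v) - (c1 - s) else (1 - n0 - n1 + v) - (m - c0 - c1 + s))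

/-- The (B0,B1) marginal. -/
noncomputable def Vcell (n0 n1 v : ℝ) : Fin 2 → Fin 2 → ℝ :=
  fun b0 b1 => if b0 = 0 then (if b1 = 0 then v else n0 - v)
    else (if b1 = 0 then n1 - v else 1 - n0 - n1 + v)

/-- The nonsignalling distribution determined by its eight coordinates. -/
noncomputable def Pdist (m0 m1 n0 n1 c00 c01 c10 c11 : ℝ) :
    Fin 2 → Fin 2 → Fin 2 → Fin 2 → ℝ :=
  fun a b x y =>
    if a = 0 then
      (if b = 0 then (if x = 0 then (if y = 0 then c00 else c01) else (if y = 0 then c10 else c11))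
       else (if x = 0 then (if y = 0 then m0 - c00 else m0 - c01)
             else (if y = 0 then m1 - c10 else m1 - c11)))
    else
      (if b = 0 then (if x = 0 then (if y = 0 then n0 - c00 else n1 - c01)
                      else (if y = 0 then n0 - c10 else n1 - c11))
       else (if x = 0 then (if y = 0 then 1 - m0 - n0 + c00 else 1 - m0 - n1 + c01)
             else (if y = 0 then 1 - m1 - n0 + c10 else 1 - m1 - n1 + c11)))

lemma chsh_marg (Q : Fin 2 → Fin 2 → Fin 2 → Fin 2 → ℝ)
    (m0 m1 n0 n1 c00 c01 c10 c11 s0 s1 v : ℝ)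
    (F000 : Q 0 0 0 0 + Q 0 1 0 0 = s0)
    (F001 : Q 0 0 0 1 + Q 0 1 0 1 = c00 - s0)
    (F010 : Q 0 0 1 0 + Q 0 1 1 0 = c01 - s0)
    (F011 : Q 0 0 1 1 + Q 0 1 1 1 = m0 - c00 - c01 + s0)
    (F100 : Q 1 0 0 0 + Q 1 1 0 0 = v - s0)
    (F101 : Q 1 0 0 1 + Q 1 1 0 1 = (n0 - v) - (c00 - s0))
    (F110 : Q 1 0 1 0 + Q 1 1 1 0 = (n1 - v) - (c01 - s0))
    (F111 : Q 1 0 1 1 + Q 1 1 1 1 = (1 - n0 - n1 + v) - (m0 - c00 - c01 + s0))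
    (G000 : Q 0 0 0 0 + Q 1 0 0 0 = s1)
    (G001 : Q 0 0 0 1 + Q 1 0 0 1 = c10 - s1)
    (G010 : Q 0 0 1 0 + Q 1 0 1 0 = c11 - s1)
    (G011 : Q 0 0 1 1 + Q 1 0 1 1 = m1 - c10 - c11 + s1)
    (G100 : Q 0 1 0 0 + Q 1 1 0 0 = v - s1)
    (G101 : Q 0 1 0 1 + Q 1 1 0 1 = (n0 - v) - (c10 - s1))
    (G110 : Q 0 1 1 0 + Q 1 1 1 0 = (n1 - v) - (c11 - s1))
    (G111 : Q 0 1 1 1 + Q 1 1 1 1 = (1 - n0 - n1 + v) - (m1 - c10 - c11 + s1))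
    (a b x y : Fin 2) :
    Pdist m0 m1 n0 n1 c00 c01 c10 c11 a b x y
      = ∑ z : (Fin 2 × Fin 2) × (Fin 2 × Fin 2), Q z.1.1 z.1.2 z.2.1 z.2.2
          * (if a = (if x = 0 then z.1.1 else z.1.2) then (1:ℝ) else 0)
          * (if b = (if y = 0 then z.2.1 else z.2.2) then (1:ℝ) else 0) := by
  fin_cases a <;> fin_cases b <;> fin_cases x <;> fin_cases y <;>
    simp only [Fintype.sum_prod_type, Fin.sum_univ_two, Pdist] <;>
    norm_num <;>
    linarith [F000, F001, F010, F011, F100, F101, F110, F111,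
      G000, G001, G010, G011, G100, G101, G110, G111]

lemma chsh_marg_one (Q : Fin 2 → Fin 2 → Fin 2 → Fin 2 → ℝ)
    (m0 n0 n1 c00 c01 s0 v : ℝ)
    (F000 : Q 0 0 0 0 + Q 0 1 0 0 = s0)
    (F001 : Q 0 0 0 1 + Q 0 1 0 1 = c00 - s0)
    (F010 : Q 0 0 1 0 + Q 0 1 1 0 = c01 - s0)
    (F011 : Q 0 0 1 1 + Q 0 1 1 1 = m0 - c00 - c01 + s0)
    (F100 : Q 1 0 0 0 + Q 1 1 0 0 = v - s0)
    (F101 : Q 1 0 0 1 + Q 1 1 0 1 = (n0 - v) - (c00 - s0))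
    (F110 : Q 1 0 1 0 + Q 1 1 1 0 = (n1 - v) - (c01 - s0))
    (F111 : Q 1 0 1 1 + Q 1 1 1 1 = (1 - n0 - n1 + v) - (m0 - c00 - c01 + s0)) :
    ∑ z : (Fin 2 × Fin 2) × (Fin 2 × Fin 2), Q z.1.1 z.1.2 z.2.1 z.2.2 = 1 := by
  simp only [Fintype.sum_prod_type, Fin.sum_univ_two]
  linarith [F000, F001, F010, F011, F100, F101, F110, F111]

lemma chsh_key (m0 m1 n0 n1 c00 c01 c10 c11 : ℝ)
    (h00a : 0 ≤ c00) (h00b : c00 ≤ m0) (h00c : c00 ≤ n0) (h00d : m0 + n0 ≤ 1 + c00)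
    (h01a : 0 ≤ c01) (h01b : c01 ≤ m0) (h01c : c01 ≤ n1) (h01d : m0 + n1 ≤ 1 + c01)
    (h10a : 0 ≤ c10) (h10b : c10 ≤ m1) (h10c : c10 ≤ n0) (h10d : m1 + n0 ≤ 1 + c10)
    (h11a : 0 ≤ c11) (h11b : c11 ≤ m1) (h11c : c11 ≤ n1) (h11d : m1 + n1 ≤ 1 + c11)
    (f11 : c00 + c01 + c10 - c11 ≤ m0 + n0)
    (f01 : c00 - c01 + c10 + c11 ≤ m1 + n0)
    (f10 : c00 + c01 - c10 + c11 ≤ m0 + n1)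
    (f00 : -c00 + c01 + c10 + c11 ≤ m1 + n1)
    (g11 : m0 + n0 - 1 ≤ c00 + c01 + c10 - c11)
    (g01 : m1 + n0 - 1 ≤ c00 - c01 + c10 + c11)
    (g10 : m0 + n1 - 1 ≤ c00 + c01 - c10 + c11)
    (g00 : m1 + n1 - 1 ≤ -c00 + c01 + c10 + c11) :
    ∃ (q : Fin 16 → ℝ) (fA fB : Fin 2 → Fin 16 → Fin 2),
      (∀ l, 0 ≤ q l) ∧ (∑ l, q l = 1) ∧
      ∀ a b x y, Pdist m0 m1 n0 n1 c00 c01 c10 c11 a b x y =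
        ∑ l, q l * (if a = fA x l then (1:ℝ) else 0) * (if b = fB y l then (1:ℝ) else 0) := by
  have hv : ∃ v : ℝ, 0 ≤ v ∧ n0 + n1 - 1 ≤ v ∧ c00 + c01 - m0 ≤ v ∧
      n0 + n1 - 1 + m0 - c00 - c01 ≤ v ∧ c10 + c11 - m1 ≤ v ∧
      n0 + n1 - 1 + m1 - c10 - c11 ≤ v ∧ v ≤ n0 ∧ v ≤ n1 ∧
      v ≤ n0 + c01 - c00 ∧ v ≤ n1 + c00 - c01 ∧ v ≤ n0 + c11 - c10 ∧ v ≤ n1 + c10 - c11 := by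
    refine ⟨max (max 0 (n0+n1-1)) (max (max (c00+c01-m0) (n0+n1-1+m0-c00-c01))
      (max (c10+c11-m1) (n0+n1-1+m1-c10-c11))), ?_, ?_, ?_, ?_, ?_, ?_, ?_, ?_, ?_, ?_, ?_, ?_⟩
    · exact le_max_of_le_left (le_max_left _ _)
    · exact le_max_of_le_left (le_max_right _ _)
    · exact le_max_of_le_right (le_max_of_le_left (le_max_left _ _))
    · exact le_max_of_le_right (le_max_of_le_left (le_max_right _ _))
    · exact le_max_of_le_right (le_max_of_le_right (le_max_left _ _))
    · exact le_max_of_le_right (le_max_of_le_right (le_max_right _ _))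
    all_goals refine max_le (max_le ?_ ?_) (max_le (max_le ?_ ?_) (max_le ?_ ?_)) <;> linarith
  obtain ⟨v, hv1, hv2, hv3, hv4, hv5, hv6, hv7, hv8, hv9, hv10, hv11, hv12⟩ := hv
  have hs0 : ∃ s : ℝ, 0 ≤ s ∧ c00 + c01 - m0 ≤ s ∧ c00 - n0 + v ≤ s ∧ c01 - n1 + v ≤ s ∧
      s ≤ c00 ∧ s ≤ c01 ∧ s ≤ v ∧ s ≤ 1 - n0 - n1 + v + c00 + c01 - m0 := by
    refine ⟨max (max 0 (c00+c01-m0)) (max (c00-n0+v) (c01-n1+v)), ?_, ?_, ?_, ?_, ?_, ?_, ?_, ?_⟩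
    · exact le_max_of_le_left (le_max_left _ _)
    · exact le_max_of_le_left (le_max_right _ _)
    · exact le_max_of_le_right (le_max_left _ _)
    · exact le_max_of_le_right (le_max_right _ _)
    all_goals refine max_le (max_le ?_ ?_) (max_le ?_ ?_) <;> linarith
  obtain ⟨s0, hs01, hs02, hs03, hs04, hs05, hs06, hs07, hs08⟩ := hs0
  have hs1 : ∃ s : ℝ, 0 ≤ s ∧ c10 + c11 - m1 ≤ s ∧ c10 - n0 + v ≤ s ∧ c11 - n1 + v ≤ s ∧
      s ≤ c10 ∧ s ≤ c11 ∧ s ≤ v ∧ s ≤ 1 - n0 - n1 + v + c10 + c11 - m1 := by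
    refine ⟨max (max 0 (c10+c11-m1)) (max (c10-n0+v) (c11-n1+v)), ?_, ?_, ?_, ?_, ?_, ?_, ?_, ?_⟩
    · exact le_max_of_le_left (le_max_left _ _)
    · exact le_max_of_le_left (le_max_right _ _)
    · exact le_max_of_le_right (le_max_left _ _)
    · exact le_max_of_le_right (le_max_right _ _)
    all_goals refine max_le (max_le ?_ ?_) (max_le ?_ ?_) <;> linarith
  obtain ⟨s1, ht1, ht2, ht3, ht4, ht5, ht6, ht7, ht8⟩ := hs1
  set f : Fin 2 → Fin 2 → Fin 2 → ℝ := triCell c00 c01 m0 n0 n1 v s0 with hfdef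
  set g : Fin 2 → Fin 2 → Fin 2 → ℝ := triCell c10 c11 m1 n0 n1 v s1 with hgdef
  set V : Fin 2 → Fin 2 → ℝ := Vcell n0 n1 v with hVdef
  have hfpos : ∀ a b0 b1, 0 ≤ f a b0 b1 := by
    intro a b0 b1
    fin_cases a <;> fin_cases b0 <;> fin_cases b1 <;> simp [hfdef, triCell] <;> linarith
  have hgpos : ∀ a b0 b1, 0 ≤ g a b0 b1 := by
    intro a b0 b1
    fin_cases a <;> fin_cases b0 <;> fin_cases b1 <;> simp [hgdef, triCell] <;> linarith
  have hfsum : ∀ b0 b1, f 0 b0 b1 + f 1 b0 b1 = V b0 b1 := by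
    intro b0 b1
    fin_cases b0 <;> fin_cases b1 <;> simp [hfdef, hVdef, triCell, Vcell] <;> ring
  have hgsum : ∀ b0 b1, g 0 b0 b1 + g 1 b0 b1 = V b0 b1 := by
    intro b0 b1
    fin_cases b0 <;> fin_cases b1 <;> simp [hgdef, hVdef, triCell, Vcell] <;> ring
  set Q : Fin 2 → Fin 2 → Fin 2 → Fin 2 → ℝ :=
    fun a0 a1 b0 b1 => if V b0 b1 = 0 then 0 else f a0 b0 b1 * g a1 b0 b1 / V b0 b1 with hQ
  have hQpos : ∀ a0 a1 b0 b1, 0 ≤ Q a0 a1 b0 b1 := by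
    intro a0 a1 b0 b1
    by_cases h : V b0 b1 = 0
    · simp [hQ, h]
    · have hVpos : 0 < V b0 b1 :=
        lt_of_le_of_ne (by rw [← hfsum]; exact add_nonneg (hfpos _ _ _) (hfpos _ _ _)) (Ne.symm h)
      simp only [hQ, if_neg h]
      exact div_nonneg (mul_nonneg (hfpos _ _ _) (hgpos _ _ _)) hVpos.le
  have hfzero : ∀ a b0 b1, V b0 b1 = 0 → f a b0 b1 = 0 := by
    intro a b0 b1 h
    have h1 := hfpos 0 b0 b1; have h2 := hfpos 1 b0 b1; have h3 := hfsum b0 b1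
    rw [h] at h3
    fin_cases a
    · show f 0 b0 b1 = 0; linarith
    · show f 1 b0 b1 = 0; linarith
  have hgzero : ∀ a b0 b1, V b0 b1 = 0 → g a b0 b1 = 0 := by
    intro a b0 b1 h
    have h1 := hgpos 0 b0 b1; have h2 := hgpos 1 b0 b1; have h3 := hgsum b0 b1
    rw [h] at h3
    fin_cases a
    · show g 0 b0 b1 = 0; linarith
    · show g 1 b0 b1 = 0; linarith
  have hQA1 : ∀ a0 b0 b1, Q a0 0 b0 b1 + Q a0 1 b0 b1 = f a0 b0 b1 := by
    intro a0 b0 b1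
    by_cases h : V b0 b1 = 0
    · simp [hQ, h, hfzero a0 b0 b1 h]
    · simp only [hQ, if_neg h]
      rw [← add_div, ← mul_add, hgsum b0 b1, mul_div_assoc, div_self h, mul_one]
  have hQA0 : ∀ a1 b0 b1, Q 0 a1 b0 b1 + Q 1 a1 b0 b1 = g a1 b0 b1 := by
    intro a1 b0 b1
    by_cases h : V b0 b1 = 0
    · simp [hQ, h, hgzero a1 b0 b1 h]
    · simp only [hQ, if_neg h]
      rw [← add_div, ← add_mul, hfsum b0 b1, mul_comm, mul_div_assoc, div_self h, mul_one]
  -- evaluated marginal identities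
  have F000 : Q 0 0 0 0 + Q 0 1 0 0 = s0 := by
    have := hQA1 0 0 0; rw [hfdef] at this; simpa [triCell] using this
  have F001 : Q 0 0 0 1 + Q 0 1 0 1 = c00 - s0 := by
    have := hQA1 0 0 1; rw [hfdef] at this; simpa [triCell] using this
  have F010 : Q 0 0 1 0 + Q 0 1 1 0 = c01 - s0 := by
    have := hQA1 0 1 0; rw [hfdef] at this; simpa [triCell] using this
  have F011 : Q 0 0 1 1 + Q 0 1 1 1 = m0 - c00 - c01 + s0 := by
    have := hQA1 0 1 1; rw [hfdef] at this; simpa [triCell] using this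
  have F100 : Q 1 0 0 0 + Q 1 1 0 0 = v - s0 := by
    have := hQA1 1 0 0; rw [hfdef] at this; simpa [triCell] using this
  have F101 : Q 1 0 0 1 + Q 1 1 0 1 = (n0 - v) - (c00 - s0) := by
    have := hQA1 1 0 1; rw [hfdef] at this; simpa [triCell] using this
  have F110 : Q 1 0 1 0 + Q 1 1 1 0 = (n1 - v) - (c01 - s0) := by
    have := hQA1 1 1 0; rw [hfdef] at this; simpa [triCell] using this
  have F111 : Q 1 0 1 1 + Q 1 1 1 1 = (1 - n0 - n1 + v) - (m0 - c00 - c01 + s0) := by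
    have := hQA1 1 1 1; rw [hfdef] at this; simpa [triCell] using this
  have G000 : Q 0 0 0 0 + Q 1 0 0 0 = s1 := by
    have := hQA0 0 0 0; rw [hgdef] at this; simpa [triCell] using this
  have G001 : Q 0 0 0 1 + Q 1 0 0 1 = c10 - s1 := by
    have := hQA0 0 0 1; rw [hgdef] at this; simpa [triCell] using this
  have G010 : Q 0 0 1 0 + Q 1 0 1 0 = c11 - s1 := by
    have := hQA0 0 1 0; rw [hgdef] at this; simpa [triCell] using this
  have G011 : Q 0 0 1 1 + Q 1 0 1 1 = m1 - c10 - c11 + s1 := by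
    have := hQA0 0 1 1; rw [hgdef] at this; simpa [triCell] using this
  have G100 : Q 0 1 0 0 + Q 1 1 0 0 = v - s1 := by
    have := hQA0 1 0 0; rw [hgdef] at this; simpa [triCell] using this
  have G101 : Q 0 1 0 1 + Q 1 1 0 1 = (n0 - v) - (c10 - s1) := by
    have := hQA0 1 0 1; rw [hgdef] at this; simpa [triCell] using this
  have G110 : Q 0 1 1 0 + Q 1 1 1 0 = (n1 - v) - (c11 - s1) := by
    have := hQA0 1 1 0; rw [hgdef] at this; simpa [triCell] using this
  have G111 : Q 0 1 1 1 + Q 1 1 1 1 = (1 - n0 - n1 + v) - (m1 - c10 - c11 + s1) := by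
    have := hQA0 1 1 1; rw [hgdef] at this; simpa [triCell] using this
  -- the equivalence Fin 16 ≃ (Fin 2 × Fin 2) × (Fin 2 × Fin 2)
  have e : Fin 16 ≃ ((Fin 2 × Fin 2) × (Fin 2 × Fin 2)) :=
    (Fintype.equivFinOfCardEq (by simp) : ((Fin 2 × Fin 2) × (Fin 2 × Fin 2)) ≃ Fin 16).symm
  refine ⟨fun l => Q (e l).1.1 (e l).1.2 (e l).2.1 (e l).2.2,
    fun x l => if x = 0 then (e l).1.1 else (e l).1.2,
    fun y l => if y = 0 then (e l).2.1 else (e l).2.2,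
    fun l => hQpos _ _ _ _, ?_, ?_⟩
  · have hs : ∑ l : Fin 16, Q (e l).1.1 (e l).1.2 (e l).2.1 (e l).2.2
        = ∑ z : (Fin 2 × Fin 2) × (Fin 2 × Fin 2), Q z.1.1 z.1.2 z.2.1 z.2.2 :=
      Equiv.sum_comp e (fun z => Q z.1.1 z.1.2 z.2.1 z.2.2)
    rw [hs]
    exact chsh_marg_one Q m0 n0 n1 c00 c01 s0 v F000 F001 F010 F011 F100 F101 F110 F111
  · intro a b x y
    have hs : ∑ l : Fin 16, Q (e l).1.1 (e l).1.2 (e l).2.1 (e l).2.2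
          * (if a = (if x = 0 then (e l).1.1 else (e l).1.2) then (1:ℝ) else 0)
          * (if b = (if y = 0 then (e l).2.1 else (e l).2.2) then (1:ℝ) else 0)
        = ∑ z : (Fin 2 × Fin 2) × (Fin 2 × Fin 2), Q z.1.1 z.1.2 z.2.1 z.2.2
          * (if a = (if x = 0 then z.1.1 else z.1.2) then (1:ℝ) else 0)
          * (if b = (if y = 0 then z.2.1 else z.2.2) then (1:ℝ) else 0) :=
      Equiv.sum_comp e (fun z => Q z.1.1 z.1.2 z.2.1 z.2.2
          * (if a = (if x = 0 then z.1.1 else z.1.2) then (1:ℝ) else 0)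
          * (if b = (if y = 0 then z.2.1 else z.2.2) then (1:ℝ) else 0))
    rw [hs]
    exact chsh_marg Q m0 m1 n0 n1 c00 c01 c10 c11 s0 s1 v F000 F001 F010 F011 F100 F101
      F110 F111 G000 G001 G010 G011 G100 G101 G110 G111 a b x y

/-- In the CHSH scenario, every nonsignalling distribution whose CHSH value is `≤ 0` for
all symmetry-relabelings (inputs, outputs, parties) admits a local hidden variable model;
equivalently, zero direct causal influence `X→B` suffices. -/
theorem chsh_nonpositive_implies_lhv (p : Fin 2 → Fin 2 → Fin 2 → Fin 2 → ℝ)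
    (hpos : ∀ a b x y, 0 ≤ p a b x y)
    (hnorm : ∀ x y, ∑ a, ∑ b, p a b x y = 1)
    (hnsA : ∀ a x y y', ∑ b, p a b x y = ∑ b, p a b x y')
    (hnsB : ∀ b y x x', ∑ a, p a b x y = ∑ a, p a b x' y)
    (hchsh : ∀ (πx πy : Equiv.Perm (Fin 2)) (πa πb : Fin 2 → Equiv.Perm (Fin 2))
      (swap : Bool), CHSHval (relabel πx πy πa πb swap p) ≤ 0) :
    ∃ (k : ℕ) (q : Fin k → ℝ) (fA fB : Fin 2 → Fin k → Fin 2),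
      (∀ l, 0 ≤ q l) ∧ (∑ l, q l = 1) ∧
      ∀ a b x y, p a b x y =
        ∑ l, q l * (if a = fA x l then (1:ℝ) else 0) * (if b = fB y l then (1:ℝ) else 0) := by
  have hN : ∀ x y, p 0 0 x y + p 0 1 x y + (p 1 0 x y + p 1 1 x y) = 1 := by
    intro x y; have := hnorm x y
    simpa [Fin.sum_univ_succ] using this
  have hA : ∀ x y, p 0 0 x y + p 0 1 x y = p 0 0 x 0 + p 0 1 x 0 := by
    intro x y; have := hnsA 0 x y 0
    simpa [Fin.sum_univ_succ] using this
  have hA1 : ∀ x y, p 1 0 x y + p 1 1 x y = p 1 0 x 0 + p 1 1 x 0 := by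
    intro x y; have := hnsA 1 x y 0
    simpa [Fin.sum_univ_succ] using this
  have hB : ∀ x y, p 0 0 x y + p 1 0 x y = p 0 0 0 y + p 1 0 0 y := by
    intro x y; have := hnsB 0 y x 0
    simpa [Fin.sum_univ_succ] using this
  have hB1 : ∀ x y, p 0 1 x y + p 1 1 x y = p 0 1 0 y + p 1 1 0 y := by
    intro x y; have := hnsB 1 y x 0
    simpa [Fin.sum_univ_succ] using this
  -- the eight CHSH facets
  have F11 := hchsh (Equiv.refl _) (Equiv.refl _) (fun _ => Equiv.refl _) (fun _ => Equiv.refl _) false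
  have F01 := hchsh (Equiv.swap 0 1) (Equiv.refl _) (fun _ => Equiv.refl _) (fun _ => Equiv.refl _) false
  have F10 := hchsh (Equiv.refl _) (Equiv.swap 0 1) (fun _ => Equiv.refl _) (fun _ => Equiv.refl _) false
  have F00 := hchsh (Equiv.swap 0 1) (Equiv.swap 0 1) (fun _ => Equiv.refl _) (fun _ => Equiv.refl _) false
  have G11 := hchsh (Equiv.refl _) (Equiv.refl _) (fun _ => Equiv.swap 0 1) (fun _ => Equiv.refl _) false
  have G01 := hchsh (Equiv.swap 0 1) (Equiv.refl _) (fun _ => Equiv.swap 0 1) (fun _ => Equiv.refl _) false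
  have G10 := hchsh (Equiv.refl _) (Equiv.swap 0 1) (fun _ => Equiv.swap 0 1) (fun _ => Equiv.refl _) false
  have G00 := hchsh (Equiv.swap 0 1) (Equiv.swap 0 1) (fun _ => Equiv.swap 0 1) (fun _ => Equiv.refl _) false
  simp only [CHSHval, relabel, Bool.false_eq_true, if_false, Equiv.refl_apply,
    Equiv.swap_apply_left, Equiv.swap_apply_right] at F11 F01 F10 F00 G11 G01 G10 G00
  obtain ⟨q, fA, fB, hq1, hq2, hq3⟩ :=
    chsh_key (p 0 0 0 0 + p 0 1 0 0) (p 0 0 1 0 + p 0 1 1 0)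
      (p 0 0 0 0 + p 1 0 0 0) (p 0 0 0 1 + p 1 0 0 1)
      (p 0 0 0 0) (p 0 0 0 1) (p 0 0 1 0) (p 0 0 1 1)
      (hpos 0 0 0 0) (by linarith [hpos 0 1 0 0]) (by linarith [hpos 1 0 0 0])
      (by linarith [hpos 1 1 0 0, hN 0 0])
      (hpos 0 0 0 1) (by linarith [hpos 0 1 0 1, hA 0 1]) (by linarith [hpos 1 0 0 1])
      (by linarith [hpos 1 1 0 1, hN 0 1, hA 0 1])
      (hpos 0 0 1 0) (by linarith [hpos 0 1 1 0]) (by linarith [hpos 1 0 1 0, hB 1 0])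
      (by linarith [hpos 1 1 1 0, hN 1 0, hB 1 0])
      (hpos 0 0 1 1) (by linarith [hpos 0 1 1 1, hA 1 1]) (by linarith [hpos 1 0 1 1, hB 1 1])
      (by linarith [hpos 1 1 1 1, hN 1 1, hA 1 1, hB 1 1])
      (by linarith [F11]) (by linarith [F01, hA 1 0, hB 1 0, hB 1 1])
      (by linarith [F10, hA 0 1, hB 1 0, hB 1 1]) (by linarith [F00, hA 1 1, hB 1 0, hB 1 1, hB 0 1])
      (by linarith [G11, hN 0 0, hA 0 1, hB 1 0, hB 1 1, hB 0 1])
      (by linarith [G01, hN 1 0, hA 1 1, hB 1 0, hB 1 1, hB 0 1])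
      (by linarith [G10, hN 0 1, hA 0 1, hB 1 0, hB 1 1, hB 0 1])
      (by linarith [G00, hN 1 1, hA 1 1, hB 1 0, hB 1 1, hB 0 1])
  refine ⟨16, q, fA, fB, hq1, hq2, ?_⟩
  intro a b x y
  rw [← hq3 a b x y]
  fin_cases a <;> fin_cases b <;> fin_cases x <;> fin_cases y <;>
    simp only [Pdist] <;> norm_num <;>
    linarith [hA 0 1, hA 1 1, hB 1 0, hB 1 1, hN 0 0, hN 0 1, hN 1 0, hN 1 1]
end

section
/- For any real numbers θ₀^B with the choices θ₀^A = 0, θ₁^A = π, θ₂^A = π/2, θ₀^B = 0, θ₂^B = −π, and correlators E_{xy} = cos(θ_x^A)cos(θ_y^B) + 2√(ε(1−ε)) sin(θ_x^A)sin(θ_y^B), the quantity I_{A→B} = E₀₀ − E₀₂ − E₁₁ + E₁₂ − E₂₀ + E₂₁ equals 3 + cos(θ₁^B) + 2√(ε(1−ε)) sin(θ₁^B); consequently, for every ε ∈ (0,1) there exists θ₁^B such that I_{A→B} > 4. -/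
open Real

/-- Measurement angles for Alice: `θ₀^A = 0`, `θ₁^A = π`, `θ₂^A = π/2`. -/
noncomputable def thetaA : Fin 3 → ℝ := ![0, Real.pi, Real.pi / 2]

/-- Measurement angles for Bob: `θ₀^B = 0`, `θ₁^B = θ`, `θ₂^B = −π`. -/
noncomputable def thetaB (θ : ℝ) : Fin 3 → ℝ := ![0, θ, -Real.pi]

/-- Correlators `E_{xy} = cos θ_x^A cos θ_y^B + 2√(ε(1−ε)) sin θ_x^A sin θ_y^B`. -/
noncomputable def corrE (ε θ : ℝ) (x y : Fin 3) : ℝ :=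
  Real.cos (thetaA x) * Real.cos (thetaB θ y) +
    2 * Real.sqrt (ε * (1 - ε)) * Real.sin (thetaA x) * Real.sin (thetaB θ y)

/-- `I_{A→B} = E₀₀ − E₀₂ − E₁₁ + E₁₂ − E₂₀ + E₂₁`. -/
noncomputable def IAB (ε θ : ℝ) : ℝ :=
  corrE ε θ 0 0 - corrE ε θ 0 2 - corrE ε θ 1 1 + corrE ε θ 1 2 -
    corrE ε θ 2 0 + corrE ε θ 2 1

lemma IAB_eq (ε θ : ℝ) :
    IAB ε θ = 3 + Real.cos θ + 2 * Real.sqrt (ε * (1 - ε)) * Real.sin θ := by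
  simp [IAB, corrE, thetaA, thetaB, Real.cos_pi, Real.sin_pi, Real.cos_pi_div_two,
    Real.sin_pi_div_two]
  ring

/-- With the chosen angles, `I_{A→B} = 3 + cos θ₁^B + 2√(ε(1−ε)) sin θ₁^B`; hence for
every `ε ∈ (0,1)` some `θ₁^B` achieves `I_{A→B} > 4`. -/
theorem IAB_formula_and_violation :
    (∀ ε θ : ℝ, ε ∈ Set.Icc (0:ℝ) 1 →
        IAB ε θ = 3 + Real.cos θ + 2 * Real.sqrt (ε * (1 - ε)) * Real.sin θ) ∧
    (∀ ε : ℝ, 0 < ε → ε < 1 → ∃ θ : ℝ, 4 < IAB ε θ) := by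
  refine ⟨fun ε θ _ => IAB_eq ε θ, fun ε hε hε1 => ?_⟩
  set c := 2 * Real.sqrt (ε * (1 - ε)) with hc
  have hcpos : 0 < c := by
    have : 0 < ε * (1 - ε) := mul_pos hε (by linarith)
    positivity
  refine ⟨Real.arctan c, ?_⟩
  rw [IAB_eq, Real.cos_arctan, Real.sin_arctan]
  have h1 : (0:ℝ) < 1 + c ^ 2 := by positivity
  have hs : 1 < Real.sqrt (1 + c ^ 2) := by
    nlinarith [Real.sq_sqrt h1.le, Real.sqrt_nonneg (1 + c ^ 2)]
  have hsp : 0 < Real.sqrt (1 + c ^ 2) := by positivity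
  have hsq : Real.sqrt (1 + c ^ 2) ^ 2 = 1 + c ^ 2 := Real.sq_sqrt h1.le
  have : 1 / Real.sqrt (1 + c ^ 2) + c * (c / Real.sqrt (1 + c ^ 2))
      = Real.sqrt (1 + c ^ 2) := by
    field_simp
    nlinarith [hsq]
  rw [← hc]
  linarith [this]
end
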